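/- Let 𝒜 be the category whose objects are natural numbers and whose morphisms m → n are the injective monotone maps f : Fin(m+1) → Fin(n+1) with f(0) = 0 and f(m) = n (the active injections of the simplex category), and let 𝒮 be the category whose objects are natural numbers and whose morphisms n → m are the surjective monotone maps Fin n → Fin m (the surjections of the augmented simplex category, including the empty ordinal). Then the opposite category 𝒜ᵒᵖ is equivalent to 𝒮, the object m of 𝒜 corresponding to the m-element ordinal. -/

import Mathlib

open CategoryTheory

/-- The category whose objects are natural numbers, an object `m` standing for the
ordinal `[m] = {0 < 1 < ⋯ < m}`, and whose morphisms `m ⟶ n` are the injective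
monotone maps `Fin (m+1) → Fin (n+1)` preserving the endpoints (the active
injections of the simplex category). -/
structure ActiveInjCat where
  n : ℕ

instance : Category ActiveInjCat where
  Hom m n := {f : Fin (m.n + 1) →o Fin (n.n + 1) //
    Function.Injective f ∧ f 0 = 0 ∧ f (Fin.last m.n) = Fin.last n.n}
  id m := ⟨OrderHom.id, fun _ _ h => h, rfl, rfl⟩
  comp f g := ⟨g.1.comp f.1, g.2.1.comp f.2.1,
    by show g.1 (f.1 0) = 0; rw [f.2.2.1, g.2.2.1],
    by show g.1 (f.1 (Fin.last _)) = Fin.last _; rw [f.2.2.2, g.2.2.2]⟩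

/-- The category whose objects are natural numbers, an object `n` standing for the
`n`-element ordinal `Fin n` (including the empty ordinal), and whose morphisms
`n ⟶ m` are the surjective monotone maps `Fin n → Fin m` (the surjections of the
augmented simplex category). -/
structure SurjCat where
  n : ℕ

instance : Category SurjCat where
  Hom m n := {f : Fin m.n →o Fin n.n // Function.Surjective f}
  id m := ⟨OrderHom.id, fun x => ⟨x, rfl⟩⟩
  comp f g := ⟨g.1.comp f.1, g.2.comp f.2⟩

namespace ActiveSurjAux

open Finset

/-- The duality relation between an active injection `f : [a] → [b]` and a
surjection `g : Fin b → Fin a`. -/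
def Rel {a b : ℕ} (f : Fin (a+1) → Fin (b+1)) (g : Fin b → Fin a) : Prop :=
  ∀ (j : Fin (a+1)) (i : Fin b), (f j : ℕ) ≤ (i : ℕ) ↔ (j : ℕ) ≤ (g i : ℕ)

lemma lowerSet_mem_iff {N : ℕ} (S : Finset (Fin N))
    (hS : ∀ a b : Fin N, a ≤ b → b ∈ S → a ∈ S) (x : Fin N) :
    x ∈ S ↔ (x : ℕ) < S.card := by
  constructor
  · intro hx
    have h1 : Finset.Iic x ⊆ S := fun a ha => hS a x (Finset.mem_Iic.1 ha) hx
    have h2 := Finset.card_le_card h1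
    rw [Fin.card_Iic] at h2
    omega
  · intro hx
    by_contra hxS
    have h1 : S ⊆ Finset.Iio x := fun s hs =>
      Finset.mem_Iio.2 (lt_of_not_ge fun h => hxS (hS x s h hs))
    have h2 := Finset.card_le_card h1
    rw [Fin.card_Iio] at h2
    omega

lemma rel_unique_right {a b : ℕ} {f : Fin (a+1) → Fin (b+1)} {g g' : Fin b → Fin a}
    (h : Rel f g) (h' : Rel f g') : g = g' := by
  funext i
  have h1 : (g i : ℕ) ≤ g' i := (h' ((g i).castSucc) i).1 ((h ((g i).castSucc) i).2 (by simp))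
  have h2 : (g' i : ℕ) ≤ g i := (h ((g' i).castSucc) i).1 ((h' ((g' i).castSucc) i).2 (by simp))
  exact Fin.ext (le_antisymm h1 h2)

lemma rel_unique_left {a b : ℕ} {f f' : Fin (a+1) → Fin (b+1)} {g : Fin b → Fin a}
    (h : Rel f g) (h' : Rel f' g) : f = f' := by
  have key : ∀ (f f' : Fin (a+1) → Fin (b+1)), Rel f g → Rel f' g →
      ∀ j, (f j : ℕ) ≤ (f' j : ℕ) := by
    intro f f' h h' j
    by_contra hc
    push_neg at hc
    have hb : ((f' j : ℕ)) < b := lt_of_lt_of_le hc (Nat.lt_succ_iff.1 (f j).isLt)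
    have h1 : (f' j : ℕ) ≤ ((⟨(f' j : ℕ), hb⟩ : Fin b) : ℕ) := le_refl _
    have h2 : (j : ℕ) ≤ g ⟨(f' j : ℕ), hb⟩ := (h' j _).1 h1
    have h3 : (f j : ℕ) ≤ (f' j : ℕ) := (h j _).2 h2
    omega
  funext j
  exact Fin.ext (le_antisymm (key f f' h h' j) (key f' f h' h j))

lemma Rel.comp' {a b c : ℕ} {f1 : Fin (a+1) → Fin (b+1)} {g1 : Fin b → Fin a}
    {f2 : Fin (b+1) → Fin (c+1)} {g2 : Fin c → Fin b}
    (h1 : Rel f1 g1) (h2 : Rel f2 g2) : Rel (f2 ∘ f1) (g1 ∘ g2) := by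
  intro j i
  exact (h2 (f1 j) i).trans (h1 j (g2 i))

lemma Rel.id {a : ℕ} : Rel (id : Fin (a+1) → Fin (a+1)) (id : Fin a → Fin a) := by
  intro j i
  simp

/-- Monotonicity of the dual surjection. -/
lemma Rel.mono_g {a b : ℕ} {f : Fin (a+1) → Fin (b+1)} {g : Fin b → Fin a}
    (_hf : Monotone f) (h : Rel f g) : Monotone g := by
  intro i i' hii
  have h1 : (f ((g i).castSucc) : ℕ) ≤ (i : ℕ) := (h ((g i).castSucc) i).2 (by simp)
  exact Fin.le_def.2 <| (h ((g i).castSucc) i').1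
    (le_trans h1 (by exact_mod_cast hii)) |>.trans_eq' (by simp)

/-- Surjectivity of the dual surjection. -/
lemma Rel.surj_g {a b : ℕ} {f : Fin (a+1) → Fin (b+1)} {g : Fin b → Fin a}
    (hf : StrictMono f) (h0 : f 0 = 0) (h : Rel f g) : Function.Surjective g := by
  intro j
  have hpos : 0 < (f j.succ : ℕ) := by
    have := hf (Fin.succ_pos j)
    rw [h0] at this
    exact_mod_cast this
  have hlt : (f j.succ : ℕ) - 1 < b := by
    have := (f j.succ).isLt
    omega
  refine ⟨⟨(f j.succ : ℕ) - 1, hlt⟩, ?_⟩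
  have hcs : (f j.castSucc : ℕ) < f j.succ := hf (Fin.castSucc_lt_succ : j.castSucc < j.succ)
  have h1 : (j : ℕ) ≤ g ⟨(f j.succ : ℕ) - 1, hlt⟩ := by
    have := (h j.castSucc ⟨(f j.succ : ℕ) - 1, hlt⟩).1 (by simp; omega)
    simpa using this
  have h2 : ¬ ((j : ℕ) + 1 ≤ g ⟨(f j.succ : ℕ) - 1, hlt⟩) := by
    intro hc
    have := (h j.succ ⟨(f j.succ : ℕ) - 1, hlt⟩).2 (by simpa using hc)
    simp at this
    omega
  have := (g ⟨(f j.succ : ℕ) - 1, hlt⟩).isLt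
  exact Fin.ext (by omega)

lemma Rel.strictMono_f {a b : ℕ} {f : Fin (a+1) → Fin (b+1)} {g : Fin b → Fin a}
    (hgs : Function.Surjective g) (h : Rel f g) : StrictMono f := by
  intro j j' hjj
  have hja : (j : ℕ) < a := lt_of_lt_of_le (Fin.lt_def.1 hjj) (Nat.lt_succ_iff.1 j'.isLt)
  obtain ⟨i, hi⟩ := hgs ⟨(j : ℕ), hja⟩
  have h1 : (f j : ℕ) ≤ (i : ℕ) := (h j i).2 (by rw [hi])
  have h2 : ¬ ((f j' : ℕ) ≤ (i : ℕ)) := by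
    intro hc
    have := (h j' i).1 hc
    rw [hi] at this
    simp at this
    omega
  exact Fin.lt_def.2 (by omega)

lemma Rel.f_zero {a b : ℕ} {f : Fin (a+1) → Fin (b+1)} {g : Fin b → Fin a}
    (hgs : Function.Surjective g) (h : Rel f g) : f 0 = (0 : Fin (b+1)) := by
  rcases Nat.eq_zero_or_pos b with hb | hb
  · subst hb
    exact Fin.ext (by omega)
  · have h1 : (f 0 : ℕ) ≤ ((⟨0, hb⟩ : Fin b) : ℕ) := (h 0 ⟨0, hb⟩).2 (by simp)
    exact Fin.ext (by simpa using h1)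

lemma Rel.f_last {a b : ℕ} {f : Fin (a+1) → Fin (b+1)} {g : Fin b → Fin a}
    (h : Rel f g) : f (Fin.last a) = Fin.last b := by
  rcases Nat.eq_zero_or_pos b with hb | hb
  · subst hb
    exact Fin.ext (by have := (f (Fin.last a)).isLt; omega)
  · have h1 : ¬ ((f (Fin.last a) : ℕ) ≤ b - 1) := by
      intro hc
      have := (h (Fin.last a) ⟨b - 1, by omega⟩).1 (by simpa using hc)
      simp [Fin.last] at this
      have := (g ⟨b - 1, by omega⟩).isLt
      omega
    have h2 := (f (Fin.last a)).isLt
    refine Fin.ext ?_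
    show (f (Fin.last a) : ℕ) = (Fin.last b : ℕ)
    simp only [Fin.val_last]
    omega

/-- Construction of the dual surjection from an active injection. -/
def phi {a b : ℕ} (f : Fin (a+1) →o Fin (b+1)) (h0 : f 0 = 0)
    (hl : f (Fin.last a) = Fin.last b) (i : Fin b) : Fin a :=
  ⟨(Finset.univ.filter fun j : Fin (a+1) => (f j : ℕ) ≤ (i : ℕ)).card - 1, by
    have hpos : 0 < (Finset.univ.filter fun j : Fin (a+1) => (f j : ℕ) ≤ (i : ℕ)).card :=
      Finset.card_pos.2 ⟨0, by simp [h0]⟩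
    have hle : (Finset.univ.filter fun j : Fin (a+1) => (f j : ℕ) ≤ (i : ℕ)).card ≤ a := by
      have hsub : (Finset.univ.filter fun j : Fin (a+1) => (f j : ℕ) ≤ (i : ℕ)) ⊆
          Finset.univ.erase (Fin.last a) := by
        intro j hj
        simp only [Finset.mem_filter] at hj
        refine Finset.mem_erase.2 ⟨?_, Finset.mem_univ _⟩
        intro hc
        rw [hc, hl] at hj
        have := i.isLt
        simp [Fin.last] at hj
        omega
      have := Finset.card_le_card hsub
      simpa using this
    omega⟩

lemma phi_rel {a b : ℕ} (f : Fin (a+1) →o Fin (b+1)) (h0 : f 0 = 0)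
    (hl : f (Fin.last a) = Fin.last b) : Rel f (phi f h0 hl) := by
  intro j i
  have hlow : ∀ x y : Fin (a+1), x ≤ y →
      y ∈ (Finset.univ.filter fun j : Fin (a+1) => (f j : ℕ) ≤ (i : ℕ)) →
      x ∈ (Finset.univ.filter fun j : Fin (a+1) => (f j : ℕ) ≤ (i : ℕ)) := by
    intro x y hxy hy
    simp only [Finset.mem_filter, Finset.mem_univ, true_and] at hy ⊢
    exact le_trans (by exact_mod_cast f.monotone hxy) hy
  have hmem := lowerSet_mem_iff _ hlow j
  have hpos : 0 < (Finset.univ.filter fun j : Fin (a+1) => (f j : ℕ) ≤ (i : ℕ)).card :=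
    Finset.card_pos.2 ⟨0, by simp [h0]⟩
  simp only [Finset.mem_filter, Finset.mem_univ, true_and] at hmem
  rw [hmem]
  show _ ↔ (j : ℕ) ≤ _ - 1
  omega

/-- Construction of the dual active injection from a surjection. -/
def psi {a b : ℕ} (g : Fin b →o Fin a) (j : Fin (a+1)) : Fin (b+1) :=
  ⟨(Finset.univ.filter fun i : Fin b => (g i : ℕ) < (j : ℕ)).card,
    Nat.lt_succ_of_le (le_trans (Finset.card_filter_le _ _) (by simp))⟩

lemma psi_mono {a b : ℕ} (g : Fin b →o Fin a) : Monotone (psi g) := by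
  intro j j' hjj
  apply Fin.le_def.2
  show (Finset.univ.filter fun i : Fin b => (g i : ℕ) < (j : ℕ)).card ≤
    (Finset.univ.filter fun i : Fin b => (g i : ℕ) < (j' : ℕ)).card
  apply Finset.card_le_card
  intro i hi
  simp only [Finset.mem_filter, Finset.mem_univ, true_and] at hi ⊢
  exact lt_of_lt_of_le hi (by exact_mod_cast hjj)

lemma psi_rel {a b : ℕ} (g : Fin b →o Fin a) : Rel (psi g) g := by
  intro j i
  have hlow : ∀ x y : Fin b, x ≤ y →
      y ∈ (Finset.univ.filter fun i : Fin b => (g i : ℕ) < (j : ℕ)) →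
      x ∈ (Finset.univ.filter fun i : Fin b => (g i : ℕ) < (j : ℕ)) := by
    intro x y hxy hy
    simp only [Finset.mem_filter, Finset.mem_univ, true_and] at hy ⊢
    exact lt_of_le_of_lt (by exact_mod_cast g.monotone hxy) hy
  have hmem := lowerSet_mem_iff _ hlow i
  simp only [Finset.mem_filter, Finset.mem_univ, true_and] at hmem
  show (Finset.univ.filter fun i : Fin b => (g i : ℕ) < (j : ℕ)).card ≤ (i : ℕ) ↔ _
  omega

end ActiveSurjAux

open ActiveSurjAux

lemma homA_ext {m n : ActiveInjCat} {f g : m ⟶ n} (h : ∀ x, f.1 x = g.1 x) : f = g :=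
  Subtype.ext (OrderHom.ext _ _ (funext h))

lemma homS_ext {m n : SurjCat} {f g : m ⟶ n} (h : ∀ x, f.1 x = g.1 x) : f = g :=
  Subtype.ext (OrderHom.ext _ _ (funext h))

/-- The duality functor from active injections to surjections. -/
def dualF : ActiveInjCatᵒᵖ ⥤ SurjCat where
  obj m := ⟨m.unop.n⟩
  map {m m'} f :=
    ⟨⟨phi f.unop.1 f.unop.2.2.1 f.unop.2.2.2,
      (phi_rel f.unop.1 f.unop.2.2.1 f.unop.2.2.2).mono_g f.unop.1.monotone⟩,
      (phi_rel f.unop.1 f.unop.2.2.1 f.unop.2.2.2).surj_g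
        (f.unop.1.monotone.strictMono_of_injective f.unop.2.1) f.unop.2.2.1⟩
  map_id m := by
    apply homS_ext
    intro x
    have := congrFun (rel_unique_right (phi_rel (𝟙 m.unop : m.unop ⟶ m.unop).1
      (𝟙 m.unop : m.unop ⟶ m.unop).2.2.1 (𝟙 m.unop : m.unop ⟶ m.unop).2.2.2)
      (Rel.id (a := m.unop.n))) x
    exact this
  map_comp {m m' m''} f g := by
    apply homS_ext
    intro x
    have hc : Rel ((f ≫ g).unop.1 : Fin (m''.unop.n+1) → Fin (m.unop.n+1))
        ((phi g.unop.1 g.unop.2.2.1 g.unop.2.2.2) ∘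
          (phi f.unop.1 f.unop.2.2.1 f.unop.2.2.2)) :=
      Rel.comp' (phi_rel g.unop.1 g.unop.2.2.1 g.unop.2.2.2)
        (phi_rel f.unop.1 f.unop.2.2.1 f.unop.2.2.2)
    exact congrFun (rel_unique_right
      (phi_rel (f ≫ g).unop.1 (f ≫ g).unop.2.2.1 (f ≫ g).unop.2.2.2) hc) x

/-- The duality functor from surjections to active injections. -/
def dualG : SurjCat ⥤ ActiveInjCatᵒᵖ where
  obj n := Opposite.op ⟨n.n⟩
  map {m n} f :=
    Quiver.Hom.op (X := (⟨n.n⟩ : ActiveInjCat)) (Y := (⟨m.n⟩ : ActiveInjCat))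
      ⟨⟨psi f.1, psi_mono f.1⟩,
        ((psi_rel f.1).strictMono_f f.2).injective,
        (psi_rel f.1).f_zero f.2,
        (psi_rel f.1).f_last⟩
  map_id n := by
    apply Quiver.Hom.unop_inj
    apply homA_ext
    intro x
    exact congrFun (rel_unique_left (psi_rel (𝟙 n : n ⟶ n).1) (Rel.id (a := n.n))) x
  map_comp {m m' m''} f g := by
    apply Quiver.Hom.unop_inj
    apply homA_ext
    intro x
    have hc : Rel ((psi f.1) ∘ (psi g.1)) ((f ≫ g).1 : Fin m.n → Fin m''.n) :=
      Rel.comp' (psi_rel g.1) (psi_rel f.1)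
    exact congrFun (rel_unique_left (psi_rel (f ≫ g).1) hc) x

theorem activeInj_op_equiv_surj :
    ∃ e : ActiveInjCatᵒᵖ ≌ SurjCat,
      ∀ m : ActiveInjCat, (e.functor.obj (Opposite.op m)).n = m.n := by
  refine ⟨CategoryTheory.Equivalence.mk dualF dualG ?_ ?_, fun m => rfl⟩
  · refine NatIso.ofComponents (fun X => Iso.refl _) ?_
    intro X Y f
    simp only [Functor.id_map, Iso.refl_hom, Category.comp_id, Category.id_comp,
      Functor.comp_map]
    apply Quiver.Hom.unop_inj
    apply homA_ext
    intro x
    exact congrFun (rel_unique_left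
      (phi_rel f.unop.1 f.unop.2.2.1 f.unop.2.2.2)
      (psi_rel ((dualF.map f).1))) x
  · refine NatIso.ofComponents (fun X => Iso.refl _) ?_
    intro X Y f
    simp only [Functor.id_map, Iso.refl_hom, Category.comp_id, Category.id_comp,
      Functor.comp_map]
    apply homS_ext
    intro x
    exact (congrFun (rel_unique_right (psi_rel f.1)
      (phi_rel ((dualG.map f).unop.1) ((dualG.map f).unop.2.2.1)
        ((dualG.map f).unop.2.2.2))) x).symm
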